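/- A planar polygonal arc starting on a line L, with all turn angles of one sign and total turning at most π, lies entirely in one closed half-plane determined by L until it ends; in particular, a polygonal chain with total absolute turning ≤ π cannot cross a line through its initial segment twice (cannot return across the extension of its starting edge). -/
import Mathlib


/-- A planar polygonal arc starting on a line `L` (the line through its first
edge), with all turn angles of one sign (the lifted edge directions `θ` are
monotone or antitone) and total turning at most `π` in absolute value, lies
entirely in one closed half-plane determined by `L`: all its vertices `p i`
satisfy `im((p i - p 0) · e^{-θ₀ i}) ≥ 0`, or all satisfy `≤ 0`. In particular
such a chain cannot return across the extension of its starting edge. -/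
theorem stmt7 (m : ℕ) (hm : 1 ≤ m) (p : Fin (m + 1) → ℂ) (θ : Fin m → ℝ)
    (hne : ∀ i : Fin m, p i.succ ≠ p i.castSucc)
    (hedge : ∀ i : Fin m,
      p i.succ - p i.castSucc = ((‖p i.succ - p i.castSucc‖ : ℝ) : ℂ) *
        Complex.exp ((θ i : ℂ) * Complex.I))
    (hone : Monotone θ ∨ Antitone θ)
    (hturn : |θ ⟨m - 1, by omega⟩ - θ ⟨0, by omega⟩| ≤ Real.pi) :
    (∀ i : Fin (m + 1),
        0 ≤ ((p i - p 0) * Complex.exp (-(θ ⟨0, by omega⟩ : ℂ) * Complex.I)).im) ∨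
    (∀ i : Fin (m + 1),
        ((p i - p 0) * Complex.exp (-(θ ⟨0, by omega⟩ : ℂ) * Complex.I)).im ≤ 0) := by
  set θ₀ : ℝ := θ ⟨0, by omega⟩ with hθ₀
  -- imaginary part of each rotated edge
  have edgeim : ∀ i : Fin m,
      ((p i.succ - p i.castSucc) * Complex.exp (-(θ₀ : ℂ) * Complex.I)).im
        = ‖p i.succ - p i.castSucc‖ * Real.sin (θ i - θ₀) := by
    intro i
    rw [hedge i, mul_assoc, ← Complex.exp_add]
    have h : (θ i : ℂ) * Complex.I + -(θ₀ : ℂ) * Complex.I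
        = ((θ i - θ₀ : ℝ) : ℂ) * Complex.I := by push_cast; ring
    rw [h]
    rw [Complex.mul_im, Complex.exp_ofReal_mul_I_im, Complex.exp_ofReal_mul_I_re]
    simp
  -- the sum formula
  set g : ℕ → ℝ := fun j =>
    if h : j < m then
      ‖p (Fin.succ ⟨j, h⟩) - p (Fin.castSucc ⟨j, h⟩)‖ * Real.sin (θ ⟨j, h⟩ - θ₀)
    else 0 with hg
  have key : ∀ n : ℕ, (hn : n ≤ m) →
      ((p ⟨n, by omega⟩ - p 0) * Complex.exp (-(θ₀ : ℂ) * Complex.I)).im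
        = ∑ j ∈ Finset.range n, g j := by
    intro n
    induction n with
    | zero =>
      intro _
      have : (⟨0, by omega⟩ : Fin (m + 1)) = 0 := rfl
      simp [this]
    | succ n ih =>
      intro hn
      have hn' : n ≤ m := by omega
      have hnm : n < m := by omega
      have hsplit : p ⟨n + 1, by omega⟩ - p 0
          = (p (Fin.succ ⟨n, hnm⟩) - p (Fin.castSucc ⟨n, hnm⟩)) + (p ⟨n, by omega⟩ - p 0) := by
        have h1 : Fin.succ (⟨n, hnm⟩ : Fin m) = (⟨n + 1, by omega⟩ : Fin (m + 1)) := rfl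
        have h2 : Fin.castSucc (⟨n, hnm⟩ : Fin m) = (⟨n, by omega⟩ : Fin (m + 1)) := rfl
        rw [h1, h2]; ring
      rw [hsplit, add_mul, Complex.add_im, ih hn', Finset.sum_range_succ, edgeim ⟨n, hnm⟩]
      rw [hg]
      simp only [hnm, dif_pos]
      ring
  rcases hone with hmono | hanti
  · left
    intro i
    have hi : (i : Fin (m+1)) = ⟨i.1, i.2⟩ := rfl
    rw [hi, key i.1 (by omega)]
    apply Finset.sum_nonneg
    intro j hj
    rw [hg]
    by_cases h : j < m
    · simp only [h, dif_pos]
      apply mul_nonneg (norm_nonneg _)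
      apply Real.sin_nonneg_of_nonneg_of_le_pi
      · have := hmono (show (⟨0, by omega⟩ : Fin m) ≤ ⟨j, h⟩ from by simp)
        linarith
      · have h1 : θ ⟨j, h⟩ ≤ θ ⟨m - 1, by omega⟩ :=
          hmono (show (⟨j, h⟩ : Fin m) ≤ ⟨m - 1, by omega⟩ from by
            simp [Fin.le_def]; omega)
        have h2 : θ₀ ≤ θ ⟨m - 1, by omega⟩ :=
          hmono (show (⟨0, by omega⟩ : Fin m) ≤ ⟨m - 1, by omega⟩ from by simp)
        have h3 : θ ⟨m - 1, by omega⟩ - θ₀ ≤ Real.pi := by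
          rw [abs_of_nonneg (by linarith)] at hturn; linarith
        linarith
    · simp [h]
  · right
    intro i
    have hi : (i : Fin (m+1)) = ⟨i.1, i.2⟩ := rfl
    rw [hi, key i.1 (by omega)]
    apply Finset.sum_nonpos
    intro j hj
    rw [hg]
    by_cases h : j < m
    · simp only [h, dif_pos]
      apply mul_nonpos_of_nonneg_of_nonpos (norm_nonneg _)
      have hle : θ ⟨j, h⟩ ≤ θ₀ :=
        hanti (show (⟨0, by omega⟩ : Fin m) ≤ ⟨j, h⟩ from by simp)
      have h1 : θ ⟨m - 1, by omega⟩ ≤ θ ⟨j, h⟩ :=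
        hanti (show (⟨j, h⟩ : Fin m) ≤ ⟨m - 1, by omega⟩ from by
          simp [Fin.le_def]; omega)
      have h2 : θ ⟨m - 1, by omega⟩ ≤ θ₀ := by linarith
      have h3 : θ₀ - θ ⟨m - 1, by omega⟩ ≤ Real.pi := by
        rw [abs_of_nonpos (by linarith)] at hturn; linarith
      have : Real.sin (θ ⟨j, h⟩ - θ₀) = -Real.sin (θ₀ - θ ⟨j, h⟩) := by
        rw [← Real.sin_neg]; ring_nf
      rw [this, neg_nonpos]
      apply Real.sin_nonneg_of_nonneg_of_le_pi <;> linarith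
    · simp [h]
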